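/- Let α be an irrational real number with 0 < α < 1/2, let k ≥ 0, and let m be a positive integer. (a) If ‖mα‖ ≤ ‖q_kα‖, then there exists a factor of slope α that is an abelian power of period m and exponent q_{k+1}. (b) If ‖mα‖ ≥ ‖q_kα‖, then every factor of slope α that is an abelian power of period m and exponent e satisfies e < q_{k+1} + q_k. -/

import Mathlib

open scoped Classical

noncomputable section

namespace SturmianAbelian

/-- Complete quotients: `cq α t = α_t` for `t ≥ 1`; `cq α 0 = α` is a dummy value chosen so that
`cq α 1 = 1/(α - ⌊α⌋) = 1/α` when `0 < α < 1`. -/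
noncomputable def cq (α : ℝ) : ℕ → ℝ
  | 0 => α
  | t + 1 => (cq α t - ⌊cq α t⌋)⁻¹

/-- Partial quotients: `pq α t = a_t = ⌊α_t⌋` for `t ≥ 1`. -/
noncomputable def pq (α : ℝ) (t : ℕ) : ℕ := (⌊cq α t⌋).toNat

/-- Denominators of the convergents of `α`: `qd α k = q_k`, with
`q_0 = 1`, `q_1 = a_1`, `q_k = a_k q_{k-1} + q_{k-2}`. -/
noncomputable def qd (α : ℝ) : ℕ → ℕ
  | 0 => 1
  | 1 => pq α 1
  | (k + 2) => pq α (k + 2) * qd α (k + 1) + qd α k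

/-- Distance from `x` to the nearest integer, `‖x‖`. -/
noncomputable def nint (x : ℝ) : ℝ := min (Int.fract x) (1 - Int.fract x)

/-- The representative of `x` modulo 1 lying in `(0, 1]`. -/
noncomputable def fract' (x : ℝ) : ℝ := 1 - Int.fract (-x)

/-- The Sturmian word of slope `α` and intercept `ρ` in the lower convention:
`s n = 1` iff the fractional part of `ρ + nα` lies in `[1 - α, 1)`. -/
noncomputable def lowerWord (α ρ : ℝ) (n : ℕ) : Bool :=
  if 1 - α ≤ Int.fract (ρ + (n : ℝ) * α) then true else false

/-- The Sturmian word of slope `α` and intercept `ρ` in the upper convention: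
`s n = 1` iff the representative of `ρ + nα` modulo 1 in `(0,1]` lies in `(1 - α, 1]`. -/
noncomputable def upperWord (α ρ : ℝ) (n : ℕ) : Bool :=
  if 1 - α < fract' (ρ + (n : ℝ) * α) then true else false

/-- `s` is a Sturmian word of slope `α` (either convention, some intercept `ρ ∈ [0,1)`). -/
def IsSturmian (α : ℝ) (s : ℕ → Bool) : Prop :=
  ∃ ρ : ℝ, 0 ≤ ρ ∧ ρ < 1 ∧ (s = lowerWord α ρ ∨ s = upperWord α ρ)

/-- `w` is a (finite, contiguous) factor of the infinite word `s`. -/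
def FactorOf (s : ℕ → Bool) (w : List Bool) : Prop :=
  ∃ i : ℕ, w = (List.range w.length).map fun j => s (i + j)

/-- `w` is a factor of slope `α`. -/
def IsFactor (α : ℝ) (w : List Bool) : Prop :=
  ∃ s : ℕ → Bool, IsSturmian α s ∧ FactorOf s w

/-- Abelian equivalence: same length and the same number of occurrences of the letter 1. -/
def AbEq (u v : List Bool) : Prop :=
  u.length = v.length ∧ u.count true = v.count true

/-- `u` is an abelian power of period `m` and exponent `e`: a concatenation of `e ≥ 2` pairwise
abelian equivalent blocks, each of length `m ≥ 1`. -/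
def IsAbelianPower (m e : ℕ) (u : List Bool) : Prop :=
  1 ≤ m ∧ 2 ≤ e ∧ u.length = e * m ∧
  ∀ i < e, ∀ j < e, AbEq ((u.drop (i * m)).take m) ((u.drop (j * m)).take m)

/-- `w` has abelian period `m`: `w` is a contiguous factor of some abelian power of period `m`. -/
def HasAbPeriod (w : List Bool) (m : ℕ) : Prop :=
  ∃ e u, IsAbelianPower m e u ∧ w <:+: u

/-- `m` is the minimum abelian period of `w`. -/
def MinAbPeriod (w : List Bool) (m : ℕ) : Prop :=
  IsLeast {p : ℕ | HasAbPeriod w p} m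

/-- `M(α) = {t·q_k : k ≥ 0, 1 ≤ t ≤ a_{k+1}}`. -/
def Mset (α : ℝ) : Set ℕ :=
  {m | ∃ k t : ℕ, 1 ≤ t ∧ t ≤ pq α (k + 1) ∧ m = t * qd α k}

/-- The set of denominators of convergents and semiconvergents of `α`. -/
def Qsc (α : ℝ) : Set ℕ :=
  {m | (∃ k : ℕ, m = qd α k) ∨
    ∃ k l : ℕ, 1 ≤ k ∧ 1 ≤ l ∧ l < pq α (k + 1) ∧ m = l * qd α k + qd α (k - 1)}

/-- The singular factor of length `q_k`: the unique factor of slope `α` of length `q_k` that is not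
abelian equivalent to any other factor of slope `α` of the same length. -/
def IsSingular (α : ℝ) (k : ℕ) (s : List Bool) : Prop :=
  IsFactor α s ∧ s.length = qd α k ∧
  ∀ u : List Bool, IsFactor α u → u.length = qd α k → u ≠ s → ¬ AbEq u s

/-- `v` occurs in `u` at position `i`. -/
def OccursAt (v u : List Bool) (i : ℕ) : Prop :=
  i + v.length ≤ u.length ∧ (u.drop i).take v.length = v

/-- `u` is a complete first return to `v`: `v` is a prefix and a suffix of `u` and `v` has exactly
two occurrences in `u`. -/
def CompleteFirstReturn (v u : List Bool) : Prop :=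
  v <+: u ∧ v <:+ u ∧ {i | OccursAt v u i}.ncard = 2

/-- `u` is a complete first return to `v` in the same phase. -/
def CFRSamePhase (v u : List Bool) : Prop :=
  v <+: u ∧ v <:+ u ∧ u.length % v.length = 0 ∧
  2 ≤ {i | OccursAt v u i}.ncard ∧
  ∀ i : ℕ, OccursAt v u i → i % v.length = 0 → i = 0 ∨ i = u.length - v.length

-- auxiliary development (to be inserted before the theorem)

variable {α : ℝ}

/-! ### Basic facts about complete and partial quotients -/

lemma cq_irr (hirr : Irrational α) : ∀ t, Irrational (cq α t)
  | 0 => hirr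
  | t + 1 => ((cq_irr hirr t).sub_intCast ⌊cq α t⌋).inv

lemma fract_cq_pos (hirr : Irrational α) (t : ℕ) :
    0 < Int.fract (cq α t) ∧ Int.fract (cq α t) < 1 := by
  have h := (cq_irr hirr t).sub_intCast ⌊cq α t⌋
  have h0 : Int.fract (cq α t) ≠ 0 := fun hz => h.ne_int 0 (by
    rw [Int.fract] at hz; rw [hz]; norm_num)
  exact ⟨lt_of_le_of_ne (Int.fract_nonneg _) (Ne.symm h0), Int.fract_lt_one _⟩

lemma cq_succ (t : ℕ) : cq α (t + 1) = (Int.fract (cq α t))⁻¹ := rfl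

lemma one_lt_cq (hirr : Irrational α) (t : ℕ) : 1 < cq α (t + 1) := by
  obtain ⟨h1, h2⟩ := fract_cq_pos hirr t
  rw [cq_succ]
  exact (one_lt_inv_iff₀).mpr ⟨h1, h2⟩

lemma pq_pos (hirr : Irrational α) (t : ℕ) : 1 ≤ pq α (t + 1) := by
  have h := one_lt_cq hirr t
  have : (1 : ℤ) ≤ ⌊cq α (t+1)⌋ := by
    rw [Int.le_floor]; push_cast; linarith
  unfold pq; omega

lemma pq_cast (hirr : Irrational α) (t : ℕ) : (pq α (t + 1) : ℤ) = ⌊cq α (t + 1)⌋ := by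
  have h := one_lt_cq hirr t
  have : (1 : ℤ) ≤ ⌊cq α (t+1)⌋ := by rw [Int.le_floor]; push_cast; linarith
  unfold pq; omega

lemma pq_cast_real (hirr : Irrational α) (t : ℕ) : (pq α (t + 1) : ℝ) = ⌊cq α (t + 1)⌋ := by
  have := pq_cast hirr t
  exact_mod_cast congrArg (Int.cast : ℤ → ℝ) this

lemma cq_one (h0 : 0 < α) (h1 : α < 1) : cq α 1 = α⁻¹ := by
  show (α - ⌊α⌋)⁻¹ = α⁻¹
  rw [Int.floor_eq_zero_iff.mpr ⟨le_of_lt h0, h1⟩]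
  norm_num

lemma two_le_pq_one (h0 : 0 < α) (h2 : α < 1/2) : 2 ≤ pq α 1 := by
  have hc : cq α 1 = α⁻¹ := cq_one h0 (by linarith)
  have h2' : (2:ℝ) < α⁻¹ := by
    have := (lt_inv_comm₀ (by norm_num : (0:ℝ) < 2) h0).mpr (by linarith)
    simpa using this
  have : (2 : ℤ) ≤ ⌊cq α 1⌋ := by rw [Int.le_floor, hc]; push_cast; linarith
  unfold pq; omega

/-! ### Convergents -/

noncomputable def qq (α : ℝ) : ℕ → ℕ
  | 0 => 0
  | 1 => 1
  | (k + 2) => pq α (k + 1) * qq α (k + 1) + qq α k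

noncomputable def pp (α : ℝ) : ℕ → ℤ
  | 0 => 1
  | 1 => 0
  | (k + 2) => pq α (k + 1) * pp α (k + 1) + pp α k

lemma qq_eq_qd : ∀ k, qq α (k + 1) = qd α k
  | 0 => rfl
  | 1 => by
    show pq α 1 * qq α 1 + qq α 0 = qd α 1
    simp [qq, qd]
  | (k + 2) => by
    show pq α (k + 2) * qq α (k + 2) + qq α (k+1) = qd α (k+2)
    rw [qq_eq_qd (k+1), qq_eq_qd k]
    rfl

lemma qd_pos (hirr : Irrational α) : ∀ k, 1 ≤ qd α k
  | 0 => le_refl 1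
  | 1 => pq_pos hirr 0
  | (k+2) => by
    show 1 ≤ pq α (k + 2) * qd α (k + 1) + qd α k
    have := qd_pos hirr k
    omega

noncomputable def Ed (α : ℝ) (k : ℕ) : ℝ := (qq α k : ℝ) * α - (pp α k : ℝ)

noncomputable def Fd (α : ℝ) (k : ℕ) : ℝ := (-1 : ℝ)^(k+1) * Ed α k

lemma Ed_rec (k : ℕ) : Ed α (k + 2) = (pq α (k+1) : ℝ) * Ed α (k + 1) + Ed α k := by
  unfold Ed
  have hq : (qq α (k+2) : ℝ) = (pq α (k+1) : ℝ) * qq α (k+1) + qq α k := by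
    rw [show qq α (k+2) = pq α (k + 1) * qq α (k + 1) + qq α k from rfl]; push_cast; ring
  have hp : (pp α (k+2) : ℝ) = (pq α (k+1) : ℝ) * pp α (k+1) + pp α k := by
    rw [show pp α (k+2) = pq α (k + 1) * pp α (k + 1) + pp α k from rfl]; push_cast; ring
  rw [hq, hp]; ring

lemma Fd_rec (k : ℕ) : Fd α (k + 2) = Fd α k - (pq α (k+1) : ℝ) * Fd α (k + 1) := by
  unfold Fd
  rw [Ed_rec]
  ring_nf

lemma Ed_mul_cq (hirr : Irrational α) (h0 : 0 < α) (h1 : α < 1) :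
    ∀ k, Ed α (k + 1) * cq α (k + 1) = - Ed α k
  | 0 => by
    have h : Ed α 1 = α := by simp [Ed, qq, pp]
    rw [h, cq_one h0 h1]
    have h' : Ed α 0 = -1 := by simp [Ed, qq, pp]
    rw [h', mul_inv_cancel₀ (ne_of_gt h0)]
    norm_num
  | (k + 1) => by
    have ih := Ed_mul_cq hirr h0 h1 k
    have hfr : Int.fract (cq α (k+1)) = cq α (k+1) - (pq α (k+1) : ℝ) := by
      rw [pq_cast_real hirr k]; rfl
    have hne : Int.fract (cq α (k+1)) ≠ 0 := ne_of_gt (fract_cq_pos hirr (k+1)).1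
    rw [Ed_rec, cq_succ (k+1), hfr]
    rw [mul_inv_eq_iff_eq_mul₀ (by rw [← hfr]; exact hne)]
    linear_combination ih

lemma Fd_mul_cq (hirr : Irrational α) (h0 : 0 < α) (h1 : α < 1) (k : ℕ) :
    Fd α (k + 1) * cq α (k + 1) = Fd α k := by
  unfold Fd
  have h := Ed_mul_cq hirr h0 h1 k
  rw [pow_succ]
  calc (-1:ℝ)^(k+1) * -1 * Ed α (k+1) * cq α (k+1)
      = (-1:ℝ)^(k+1) * -1 * (Ed α (k+1) * cq α (k+1)) := by ring
    _ = (-1:ℝ)^(k+1) * -1 * (- Ed α k) := by rw [h]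
    _ = (-1:ℝ)^(k+1) * Ed α k := by ring

lemma Fd_pos (hirr : Irrational α) (h0 : 0 < α) (h1 : α < 1) : ∀ k, 0 < Fd α k
  | 0 => by norm_num [Fd, Ed, qq, pp]
  | (k+1) => by
    have ih := Fd_pos hirr h0 h1 k
    have h := Fd_mul_cq hirr h0 h1 k
    have hcq : 0 < cq α (k+1) := lt_trans one_pos (one_lt_cq hirr k)
    nlinarith

lemma Fd_succ_lt (hirr : Irrational α) (h0 : 0 < α) (h1 : α < 1) (k : ℕ) :
    Fd α (k + 1) < Fd α k := by
  have h := Fd_mul_cq hirr h0 h1 k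
  have hcq := one_lt_cq hirr k
  have hp := Fd_pos hirr h0 h1 (k+1)
  nlinarith

lemma Fd_one : Fd α 1 = α := by simp [Fd, Ed, qq, pp]

lemma Fd_le_alpha (hirr : Irrational α) (h0 : 0 < α) (h1 : α < 1) :
    ∀ k, Fd α (k + 1) ≤ α
  | 0 => le_of_eq Fd_one
  | (k+1) => le_of_lt (lt_of_lt_of_le (Fd_succ_lt hirr h0 h1 (k+1)) (Fd_le_alpha hirr h0 h1 k))

lemma Gid : ∀ j, (qq α (j+1) : ℝ) * Fd α j + (qq α j : ℝ) * Fd α (j + 1) = 1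
  | 0 => by norm_num [qq, Fd, Ed, pp]
  | (j+1) => by
    have ih := Gid j
    have hr := Fd_rec (α := α) j
    have hq : (qq α (j+2) : ℝ) = (pq α (j+1) : ℝ) * qq α (j+1) + qq α j := by
      rw [show qq α (j+2) = pq α (j + 1) * qq α (j + 1) + qq α j from rfl]; push_cast; ring
    rw [hq, hr]
    linarith [ih]

lemma qdF_lt_one (hirr : Irrational α) (h0 : 0 < α) (h1 : α < 1) (k : ℕ) :
    (qd α (k+1) : ℝ) * Fd α (k+1) < 1 := by
  have hg := Gid (α := α) (k+1)
  rw [qq_eq_qd (k+1), qq_eq_qd k] at hg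
  have h1' : (1:ℝ) ≤ (qd α k : ℝ) := by exact_mod_cast qd_pos hirr k
  have h2 := Fd_pos hirr h0 h1 (k+2)
  nlinarith

lemma one_lt_qdF (hirr : Irrational α) (h0 : 0 < α) (h1 : α < 1) (k : ℕ) :
    1 < ((qd α (k+1) : ℝ) + (qd α k : ℝ)) * Fd α (k+1) := by
  have hg := Gid (α := α) (k+1)
  rw [qq_eq_qd (k+1), qq_eq_qd k] at hg
  have h1' : (1:ℝ) ≤ (qd α k : ℝ) := by exact_mod_cast qd_pos hirr k
  have h2 := Fd_succ_lt hirr h0 h1 (k+1)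
  have h3 := Fd_pos hirr h0 h1 (k+2)
  nlinarith

lemma two_le_qd (hirr : Irrational α) (h0 : 0 < α) (h2 : α < 1/2) :
    ∀ k, 2 ≤ qd α (k + 1)
  | 0 => two_le_pq_one h0 h2
  | (k+1) => by
    show 2 ≤ pq α (k + 2) * qd α (k + 1) + qd α k
    have h1 : 1 ≤ pq α (k+2) := pq_pos hirr (k+1)
    have h2' := qd_pos hirr (k+1)
    have h3 := qd_pos hirr k
    have := Nat.mul_le_mul h1 h2'
    omega

/-! ### nint lemmas -/

lemma nint_nonneg (x : ℝ) : 0 ≤ nint x :=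
  le_min (Int.fract_nonneg x) (by linarith [Int.fract_lt_one x])

lemma nint_int_add (n : ℤ) (d : ℝ) : nint ((n : ℝ) + d) = nint d := by
  unfold nint; rw [Int.fract_intCast_add]

lemma nint_eq_abs {d : ℝ} (h : |d| ≤ 1/2) : nint d = |d| := by
  rcases le_or_gt 0 d with hd | hd
  · rw [abs_of_nonneg hd] at h ⊢
    have hfr : Int.fract d = d := Int.fract_eq_self.mpr ⟨hd, by linarith⟩
    unfold nint; rw [hfr]
    exact min_eq_left (by linarith)
  · rw [abs_of_neg hd] at h ⊢
    have hfr : Int.fract d = d + 1 := by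
      have h1 : Int.fract (d + (1:ℤ)) = d + (1:ℤ) := by
        apply Int.fract_eq_self.mpr
        constructor <;> push_cast <;> linarith
      rw [Int.fract_add_intCast] at h1; exact_mod_cast h1
    unfold nint; rw [hfr, min_eq_right (by linarith)]
    ring

lemma nint_le (x : ℝ) (n : ℤ) : nint x ≤ |x - n| := by
  have h1 : (⌊x⌋ : ℝ) ≤ x := Int.floor_le x
  have h2 : x < ⌊x⌋ + 1 := Int.lt_floor_add_one x
  have hfr : Int.fract x = x - ⌊x⌋ := rfl
  rcases le_or_gt (n : ℝ) (⌊x⌋ : ℝ) with hn | hn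
  · calc nint x ≤ Int.fract x := min_le_left _ _
      _ ≤ x - n := by rw [hfr]; linarith
      _ ≤ |x - n| := le_abs_self _
  · have h3 : (⌊x⌋ : ℝ) + 1 ≤ n := by
      have h4 : ⌊x⌋ < n := by exact_mod_cast hn
      exact_mod_cast h4
    calc nint x ≤ 1 - Int.fract x := min_le_right _ _
      _ ≤ n - x := by rw [hfr]; linarith
      _ ≤ |x - n| := by rw [abs_sub_comm]; exact le_abs_self _

lemma nint_eq_round (x : ℝ) : nint x = |x - round x| := by
  have h2 := nint_int_add (-round x) x
  rw [show ((-round x : ℤ) : ℝ) + x = x - round x by push_cast; ring] at h2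
  rw [← h2]
  exact nint_eq_abs (abs_sub_round x)

lemma nint_qd (hirr : Irrational α) (h0 : 0 < α) (h2 : α < 1/2) (k : ℕ) :
    nint ((qd α k : ℝ) * α) = Fd α (k+1) := by
  have h1 : α < 1 := by linarith
  have hq : (qd α k : ℝ) * α = ((pp α (k+1) : ℤ) : ℝ) + Ed α (k+1) := by
    have : (qd α k : ℝ) = (qq α (k+1) : ℝ) := by rw [qq_eq_qd]
    rw [this]; unfold Ed; ring
  rw [hq, nint_int_add]
  have habs : |Ed α (k+1)| = Fd α (k+1) := by
    have hF : |Fd α (k+1)| = |Ed α (k+1)| := by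
      unfold Fd; rw [abs_mul, abs_pow, abs_neg, abs_one, one_pow, one_mul]
    rw [← hF, abs_of_pos (Fd_pos hirr h0 h1 (k+1))]
  have hle : |Ed α (k+1)| ≤ 1/2 := by
    rw [habs]
    linarith [Fd_le_alpha hirr h0 h1 k]
  rw [nint_eq_abs hle, habs]

/-! ### Counting letters in Sturmian words -/

noncomputable def cnt (s : ℕ → Bool) (i n : ℕ) : ℕ :=
  ((List.range n).map fun j => s (i + j)).count true

lemma cnt_succ (s : ℕ → Bool) (i n : ℕ) :
    cnt s i (n+1) = cnt s i n + (if s (i+n) then 1 else 0) := by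
  unfold cnt
  rw [List.range_succ, List.map_append, List.count_append]
  simp [List.count_singleton]

lemma floor_add_alpha (h0 : 0 < α) (h1 : α < 1) (z : ℝ) :
    ⌊z + α⌋ = ⌊z⌋ + (if 1 - α ≤ Int.fract z then 1 else 0) := by
  have hz : z = (⌊z⌋ : ℝ) + Int.fract z := by rw [Int.fract]; ring
  have hf0 : 0 ≤ Int.fract z := Int.fract_nonneg z
  have hf1 : Int.fract z < 1 := Int.fract_lt_one z
  split
  · next h =>
    have heq : ⌊z + α⌋ = ⌊Int.fract z + α⌋ + ⌊z⌋ := by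
      rw [show z + α = Int.fract z + α + (⌊z⌋:ℤ) by push_cast; linarith]
      rw [Int.floor_add_intCast]
    have h2 : ⌊Int.fract z + α⌋ = 1 := by
      rw [Int.floor_eq_iff]
      constructor <;> push_cast <;> linarith
    rw [heq, h2]; ring
  · next h =>
    push_neg at h
    have heq : ⌊z + α⌋ = ⌊Int.fract z + α⌋ + ⌊z⌋ := by
      rw [show z + α = Int.fract z + α + (⌊z⌋:ℤ) by push_cast; linarith]
      rw [Int.floor_add_intCast]
    have h2 : ⌊Int.fract z + α⌋ = 0 := by
      apply Int.floor_eq_zero_iff.mpr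
      rw [Set.mem_Ico]
      constructor <;> linarith
    rw [heq, h2]; ring

lemma fract'_eq (z : ℝ) : fract' z = 1 + z - ⌈z⌉ := by
  unfold fract'
  rw [Int.fract, Int.floor_neg]
  push_cast; ring

lemma ceil_add_alpha (h0 : 0 < α) (h1 : α < 1) (z : ℝ) :
    ⌈z + α⌉ = ⌈z⌉ + (if 1 - α < fract' z then 1 else 0) := by
  have hc1 : (⌈z⌉ : ℝ) - 1 < z := by linarith [Int.ceil_lt_add_one z]
  have hc2 : z ≤ (⌈z⌉ : ℝ) := Int.le_ceil z
  rw [fract'_eq]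
  split
  · next h =>
    have heq : ⌈z + α⌉ = ⌈z⌉ + 1 := by
      rw [Int.ceil_eq_iff]
      constructor <;> push_cast <;> linarith
    rw [heq]
  · next h =>
    push_neg at h
    have heq : ⌈z + α⌉ = ⌈z⌉ := by
      rw [Int.ceil_eq_iff]
      constructor <;> push_cast <;> linarith
    rw [heq]; ring

lemma cnt_lower (h0 : 0 < α) (h1 : α < 1) (ρ : ℝ) (i : ℕ) :
    ∀ n : ℕ, (cnt (lowerWord α ρ) i n : ℤ) = ⌊ρ + ((i + n : ℕ) : ℝ) * α⌋ - ⌊ρ + (i : ℝ) * α⌋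
  | 0 => by simp [cnt]
  | (n+1) => by
    have ih := cnt_lower h0 h1 ρ i n
    have hst := floor_add_alpha h0 h1 (ρ + ((i + n : ℕ) : ℝ) * α)
    have hz : ρ + ((i + n : ℕ) : ℝ) * α + α = ρ + ((i + (n+1) : ℕ) : ℝ) * α := by
      push_cast; ring
    rw [hz] at hst
    have hcond : (lowerWord α ρ (i+n) = true) ↔
        (1 - α ≤ Int.fract (ρ + ((i + n : ℕ) : ℝ) * α)) := by
      simp [lowerWord]
    rw [cnt_succ]
    push_cast at ih hst hcond ⊢
    rw [ih, hst]
    by_cases hb : 1 - α ≤ Int.fract (ρ + ((i:ℝ) + n) * α)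
    · rw [if_pos hb, if_pos (hcond.mpr hb)]; ring
    · rw [if_neg hb, if_neg (fun hh => hb (hcond.mp hh))]; ring

lemma cnt_upper (h0 : 0 < α) (h1 : α < 1) (ρ : ℝ) (i : ℕ) :
    ∀ n : ℕ, (cnt (upperWord α ρ) i n : ℤ) = ⌈ρ + ((i + n : ℕ) : ℝ) * α⌉ - ⌈ρ + (i : ℝ) * α⌉
  | 0 => by simp [cnt]
  | (n+1) => by
    have ih := cnt_upper h0 h1 ρ i n
    have hst := ceil_add_alpha h0 h1 (ρ + ((i + n : ℕ) : ℝ) * α)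
    have hz : ρ + ((i + n : ℕ) : ℝ) * α + α = ρ + ((i + (n+1) : ℕ) : ℝ) * α := by
      push_cast; ring
    rw [hz] at hst
    have hcond : (upperWord α ρ (i+n) = true) ↔
        (1 - α < fract' (ρ + ((i + n : ℕ) : ℝ) * α)) := by
      simp [upperWord]
    rw [cnt_succ]
    push_cast at ih hst hcond ⊢
    rw [ih, hst]
    by_cases hb : 1 - α < fract' (ρ + ((i:ℝ) + n) * α)
    · rw [if_pos hb, if_pos (hcond.mpr hb)]; ring
    · rw [if_neg hb, if_neg (fun hh => hb (hcond.mp hh))]; ring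

lemma sturmian_N (h0 : 0 < α) (h1 : α < 1) {s : ℕ → Bool} (hs : IsSturmian α s) :
    ∃ N : ℕ → ℤ, (∀ i n, (cnt s i n : ℤ) = N (i+n) - N i) ∧
      (∀ a b : ℕ, |((N a : ℝ) - (N b : ℝ)) - (((a:ℝ) - (b:ℝ)) * α)| < 1) := by
  obtain ⟨ρ, _, _, hs | hs⟩ := hs
  · refine ⟨fun n => ⌊ρ + (n:ℝ) * α⌋, fun i n => by rw [hs]; exact cnt_lower h0 h1 ρ i n, ?_⟩
    intro a b
    have hfa : (⌊ρ + (a:ℝ)*α⌋ : ℝ) ≤ ρ + (a:ℝ)*α := Int.floor_le _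
    have hfa' : ρ + (a:ℝ)*α < ⌊ρ + (a:ℝ)*α⌋ + 1 := Int.lt_floor_add_one _
    have hfb : (⌊ρ + (b:ℝ)*α⌋ : ℝ) ≤ ρ + (b:ℝ)*α := Int.floor_le _
    have hfb' : ρ + (b:ℝ)*α < ⌊ρ + (b:ℝ)*α⌋ + 1 := Int.lt_floor_add_one _
    rw [abs_lt]
    constructor <;> simp only [] <;> linarith
  · refine ⟨fun n => ⌈ρ + (n:ℝ) * α⌉, fun i n => by rw [hs]; exact cnt_upper h0 h1 ρ i n, ?_⟩
    intro a b
    have hfa : ρ + (a:ℝ)*α ≤ (⌈ρ + (a:ℝ)*α⌉ : ℝ) := Int.le_ceil _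
    have hfa' : (⌈ρ + (a:ℝ)*α⌉ : ℝ) < ρ + (a:ℝ)*α + 1 := Int.ceil_lt_add_one _
    have hfb : ρ + (b:ℝ)*α ≤ (⌈ρ + (b:ℝ)*α⌉ : ℝ) := Int.le_ceil _
    have hfb' : (⌈ρ + (b:ℝ)*α⌉ : ℝ) < ρ + (b:ℝ)*α + 1 := Int.ceil_lt_add_one _
    rw [abs_lt]
    constructor <;> simp only [] <;> linarith

lemma block_eq (f : ℕ → Bool) (L a b : ℕ) (h : a + b ≤ L) :
    (((List.range L).map f).drop a).take b = (List.range b).map fun l => f (a + l) := by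
  apply List.ext_getElem
  · simp; omega
  · intro n h1 h2
    simp at h1 h2 ⊢

lemma abelian_bound (h0 : 0 < α) (h1 : α < 1) {s : ℕ → Bool} {u : List Bool} {m e : ℕ}
    (hs : IsSturmian α s) (hf : FactorOf s u) (hab : IsAbelianPower m e u) :
    (e : ℝ) * nint ((m:ℝ) * α) < 1 := by
  obtain ⟨N, hN, hNb⟩ := sturmian_N h0 h1 hs
  obtain ⟨i, hu⟩ := hf
  obtain ⟨hm, he, hlen, habeq⟩ := hab
  rw [hlen] at hu
  have hblock : ∀ j, j < e →
      (u.drop (j*m)).take m = (List.range m).map fun l => s (i + (j*m + l)) := by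
    intro j hj
    rw [hu, block_eq _ (e*m) (j*m) m (by
      have : j + 1 ≤ e := hj
      calc j*m + m = (j+1)*m := by ring
        _ ≤ e*m := Nat.mul_le_mul_right m this)]
  have hcnt : ∀ j, j < e → ((u.drop (j*m)).take m).count true = cnt s (i + j*m) m := by
    intro j hj
    rw [hblock j hj]
    unfold cnt
    congr 1
    apply List.map_congr_left
    intro l _
    rw [Nat.add_assoc]
  have he0 : 0 < e := by omega
  have hceq : ∀ j, j < e → cnt s (i + j*m) m = cnt s i m := by
    intro j hj
    have h := (habeq j hj 0 he0).2
    rw [hcnt j hj, hcnt 0 he0] at h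
    simpa using h
  have hNstep : ∀ j, j < e → N (i + j*m + m) = N (i + j*m) + cnt s i m := by
    intro j hj
    have h := hN (i + j*m) m
    rw [hceq j hj] at h
    omega
  have htel : ∀ j, j ≤ e → N (i + j*m) = N i + j * (cnt s i m : ℤ) := by
    intro j
    induction j with
    | zero => intro _; simp
    | succ j ih =>
      intro hj
      have hj' : j < e := by omega
      have h1 := hNstep j hj'
      have h2 := ih (by omega)
      have harith : i + (j+1)*m = i + j*m + m := by ring
      rw [harith, h1, h2]
      push_cast
      ring
  have hfin := htel e (le_refl e)
  have hbnd := hNb (i + e*m) i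
  rw [hfin] at hbnd
  have hc : |((e : ℝ) * (cnt s i m : ℤ)) - (e:ℝ) * ((m:ℝ) * α)| < 1 := by
    have harith : ((i + e*m : ℕ) : ℝ) - (i:ℝ) = (e:ℝ) * (m:ℝ) := by push_cast; ring
    rw [harith] at hbnd
    have : ((N i + (e:ℤ) * (cnt s i m : ℤ) : ℤ) : ℝ) - (N i : ℝ) = (e:ℝ) * ((cnt s i m : ℤ) : ℝ) := by
      push_cast; ring
    rw [this] at hbnd
    convert hbnd using 2
    ring
  have hnle : nint ((m:ℝ) * α) ≤ |(m:ℝ) * α - ((cnt s i m : ℤ) : ℝ)| := nint_le _ _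
  calc (e:ℝ) * nint ((m:ℝ) * α) ≤ (e:ℝ) * |(m:ℝ) * α - ((cnt s i m : ℤ) : ℝ)| := by
        apply mul_le_mul_of_nonneg_left hnle (by positivity)
    _ = |(e:ℝ) * ((m:ℝ)*α - ((cnt s i m : ℤ) : ℝ))| := by
        rw [abs_mul, abs_of_nonneg (show (0:ℝ) ≤ (e:ℝ) by positivity)]
    _ = |(e:ℝ)*((m:ℝ)*α) - (e:ℝ)*(((cnt s i m : ℤ)):ℝ)| := by rw [mul_sub]
    _ = |(e:ℝ) * (((cnt s i m : ℤ)):ℝ) - (e:ℝ)*((m:ℝ)*α)| := abs_sub_comm _ _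
    _ < 1 := hc

theorem exponent_lower_and_upper_bound
    (α : ℝ) (hirr : Irrational α) (h0 : 0 < α) (h2 : α < 1 / 2)
    (k : ℕ) (m : ℕ) (hm : 0 < m) :
    (nint ((m : ℝ) * α) ≤ nint ((qd α k : ℝ) * α) →
      ∃ u : List Bool, IsFactor α u ∧ IsAbelianPower m (qd α (k + 1)) u) ∧
    (nint ((qd α k : ℝ) * α) ≤ nint ((m : ℝ) * α) →
      ∀ e : ℕ, ∀ u : List Bool, IsFactor α u → IsAbelianPower m e u →
        e < qd α (k + 1) + qd α k) := by
  have h1 : α < 1 := by linarith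
  constructor
  · -- Part (a): existence of an abelian power of exponent q_{k+1}
    intro hle
    rw [nint_qd hirr h0 h2 k] at hle
    obtain ⟨e, he_def⟩ : ∃ n : ℕ, n = qd α (k+1) := ⟨_, rfl⟩
    rw [← he_def]
    have he2 : 2 ≤ e := by rw [he_def]; exact two_le_qd hirr h0 h2 k
    have heF : (e:ℝ) * Fd α (k+1) < 1 := by rw [he_def]; exact qdF_lt_one hirr h0 h1 k
    obtain ⟨c, γ, hγ_def, hγabs⟩ :
        ∃ (c : ℤ) (γ : ℝ), (m:ℝ)*α = (c:ℝ) + γ ∧ |γ| = nint ((m:ℝ)*α) :=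
      ⟨round ((m:ℝ)*α), (m:ℝ)*α - round ((m:ℝ)*α), by ring, (nint_eq_round _).symm⟩
    have heγ : (e:ℝ) * |γ| < 1 := by
      calc (e:ℝ)*|γ| = (e:ℝ)*nint ((m:ℝ)*α) := by rw [hγabs]
        _ ≤ (e:ℝ)*Fd α (k+1) := mul_le_mul_of_nonneg_left hle (by positivity)
        _ < 1 := heF
    obtain ⟨ρ, hρ_def⟩ : ∃ r : ℝ, r = if 0 ≤ γ then 0 else (1 - (e:ℝ)*γ)/2 := ⟨_, rfl⟩
    have hρj : ∀ j : ℕ, j ≤ e → 0 ≤ ρ + (j:ℝ)*γ ∧ ρ + (j:ℝ)*γ < 1 := by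
      intro j hj
      have hj' : (j:ℝ) ≤ (e:ℝ) := by exact_mod_cast hj
      have hj0 : (0:ℝ) ≤ (j:ℝ) := by positivity
      rw [hρ_def]
      split
      · next hγ0 =>
        rw [abs_of_nonneg hγ0] at heγ
        have hmono : (j:ℝ)*γ ≤ (e:ℝ)*γ := mul_le_mul_of_nonneg_right hj' hγ0
        have hnn : 0 ≤ (j:ℝ)*γ := mul_nonneg hj0 hγ0
        constructor <;> linarith
      · next hγ0 =>
        push_neg at hγ0
        rw [abs_of_neg hγ0] at heγ
        have hmono : (e:ℝ)*γ ≤ (j:ℝ)*γ := mul_le_mul_of_nonpos_right hj' (le_of_lt hγ0)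
        have hnp : (j:ℝ)*γ ≤ 0 := mul_nonpos_of_nonneg_of_nonpos hj0 (le_of_lt hγ0)
        have hgt : -1 < (e:ℝ)*γ := by nlinarith
        constructor <;> linarith
    have hρ0 : 0 ≤ ρ := by have := (hρj 0 (by omega)).1; simpa using this
    have hρ1 : ρ < 1 := by have := (hρj 0 (by omega)).2; simpa using this
    have hfloor : ∀ j : ℕ, j ≤ e → ⌊ρ + ((j*m : ℕ) : ℝ) * α⌋ = (j:ℤ) * c := by
      intro j hj
      have harr : ρ + ((j*m : ℕ):ℝ)*α = (ρ + (j:ℝ)*γ) + (((j:ℤ)*c : ℤ) : ℝ) := by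
        push_cast
        linear_combination (j:ℝ) * hγ_def
      rw [harr, Int.floor_add_intCast]
      have hz : ⌊ρ + (j:ℝ)*γ⌋ = 0 := by
        apply Int.floor_eq_zero_iff.mpr
        rw [Set.mem_Ico]
        exact hρj j hj
      rw [hz, zero_add]
    obtain ⟨u, hu_def⟩ : ∃ u : List Bool, u = (List.range (e*m)).map (lowerWord α ρ) := ⟨_, rfl⟩
    have hul : u.length = e*m := by simp [hu_def]
    have hblk : ∀ j, j < e →
        (u.drop (j*m)).take m = (List.range m).map fun l => lowerWord α ρ (j*m + l) := by
      intro j hj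
      rw [hu_def]
      apply block_eq
      have hj1 : j + 1 ≤ e := hj
      calc j*m + m = (j+1)*m := by ring
        _ ≤ e*m := Nat.mul_le_mul_right m hj1
    have hcval : ∀ j, j < e → (cnt (lowerWord α ρ) (j*m) m : ℤ) = c := by
      intro j hj
      rw [cnt_lower h0 h1 ρ (j*m) m]
      have e1 : ⌊ρ + (((j*m + m) : ℕ):ℝ)*α⌋ = ((j:ℤ)+1)*c := by
        have harr : (j*m + m) = ((j+1)*m : ℕ) := by ring
        rw [harr]
        have := hfloor (j+1) (by omega)
        rw [this]; push_cast; ring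
      have e2 : ⌊ρ + ((j*m : ℕ):ℝ)*α⌋ = (j:ℤ)*c := hfloor j (le_of_lt hj)
      rw [e1, e2]; ring
    refine ⟨u, ⟨lowerWord α ρ, ⟨ρ, hρ0, hρ1, Or.inl rfl⟩, ⟨0, ?_⟩⟩, ?_⟩
    · rw [hul, hu_def]
      apply List.map_congr_left
      intro j _
      rw [Nat.zero_add]
    · refine ⟨hm, he2, hul, ?_⟩
      intro j1 hj1 j2 hj2
      constructor
      · rw [hblk j1 hj1, hblk j2 hj2]; simp
      · rw [hblk j1 hj1, hblk j2 hj2]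
        show cnt (lowerWord α ρ) (j1*m) m = cnt (lowerWord α ρ) (j2*m) m
        have hv1 := hcval j1 hj1
        have hv2 := hcval j2 hj2
        exact_mod_cast hv1.trans hv2.symm
  · -- Part (b): upper bound on the exponent
    intro hge e u hfac hab
    obtain ⟨s, hs, hf⟩ := hfac
    have hb := abelian_bound h0 h1 hs hf hab
    rw [nint_qd hirr h0 h2 k] at hge
    have hF := Fd_pos hirr h0 h1 (k+1)
    have h2' := one_lt_qdF hirr h0 h1 k
    have hmul : (e:ℝ) * Fd α (k+1) ≤ (e:ℝ) * nint ((m:ℝ)*α) :=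
      mul_le_mul_of_nonneg_left hge (by positivity)
    have hlt : (e:ℝ) < (qd α (k+1) : ℝ) + (qd α k : ℝ) := by
      by_contra hcon
      push_neg at hcon
      have : ((qd α (k+1) : ℝ) + (qd α k : ℝ)) * Fd α (k+1) ≤ (e:ℝ) * Fd α (k+1) :=
        mul_le_mul_of_nonneg_right hcon (le_of_lt hF)
      linarith
    exact_mod_cast hlt

end SturmianAbelian
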